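/- Let p, q, p', q', k ≥ 1 with kpq = p'q', let ξ₁, …, ξ_k : [0,1] → [0,1] be continuous, and let φ : Z_{p,q} → A_{p'q'} be the *-homomorphism φ(f) = diag(f∘ξ₁, …, f∘ξ_k). Then the following are equivalent: (i) there exists a unitary u ∈ A_{p'q'} such that the image of u φ(·) u* is contained in Z_{p',q'}; (ii) the congruences q·n₀⁰ ≡ p·n₀¹ ≡ 0 (mod q'), q·n₁⁰ ≡ p·n₁¹ ≡ 0 (mod p'), n₀ᵗ ≡ 0 (mod q') and n₁ᵗ ≡ 0 (mod p') for every t ∈ (0,1) hold, where n_sᵗ denotes the number of indices i with ξᵢ(s) = t. -/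

import Mathlib

open MeasureTheory
open scoped ENNReal

noncomputable section

/-- The unit interval `[0,1]` as a type. -/
abbrev 𝕀 : Type := unitInterval

/-- A measure on `[0,1]` is *faithful* if it assigns positive measure to every
nonempty (relatively) open subset. -/
def Faithful (μ : Measure 𝕀) : Prop :=
  ∀ U : Set 𝕀, IsOpen U → U.Nonempty → 0 < μ U

/-- A measure on `[0,1]` is *diffuse* (atomless) if every singleton has measure zero. -/
def Diffuse (μ : Measure 𝕀) : Prop :=
  ∀ t : 𝕀, μ {t} = 0

open scoped Matrix.Norms.L2Operator ComplexOrder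

/-- `n × n` complex matrices. -/
abbrev Mat (n : ℕ) : Type := Matrix (Fin n) (Fin n) ℂ

/-- The C*-algebra `𝔸 n = C([0,1], Mₙ(ℂ))` of continuous matrix-valued functions. -/
abbrev 𝔸 (n : ℕ) : Type := C(𝕀, Mat n)

/-- The tracial state on `𝔸 n` induced by the measure `μ` on `[0,1]`:
`f ↦ ∫ tr(f t) dμ(t)`, where `tr` is the normalized trace on `Mₙ(ℂ)`. -/
def trInt (n : ℕ) (μ : Measure 𝕀) (f : 𝔸 n) : ℂ :=
  ∫ t, (f t).trace / (n : ℂ) ∂μ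

/-- Block diagonal (with `k` blocks of size `n`) as a linear map, reindexed to `Fin m`
where `m = n * k`. -/
def diagL (n k m : ℕ) (h : n * k = m) : (Fin k → Mat n) →ₗ[ℂ] Mat m where
  toFun g := (Matrix.blockDiagonal g).submatrix
      (fun a => finProdFinEquiv.symm (Fin.cast h.symm a))
      (fun a => finProdFinEquiv.symm (Fin.cast h.symm a))
  map_add' g₁ g₂ := by
    simp [Matrix.blockDiagonal_add, Matrix.submatrix_add]
  map_smul' c g := by
    simp [Matrix.blockDiagonal_smul, Matrix.submatrix_smul]

/-- `diag n k m h ξ f` is the element of `𝔸 m` whose value at `t` is the block-diagonal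
matrix with diagonal blocks `f (ξ 0 t), …, f (ξ (k-1) t)`. -/
def diag (n k m : ℕ) (h : n * k = m) (ξ : Fin k → C(𝕀, 𝕀)) (f : 𝔸 n) : 𝔸 m where
  toFun t := diagL n k m h (fun j => f (ξ j t))
  continuous_toFun := (diagL n k m h).continuous_of_finiteDimensional.comp
      (continuous_pi fun j => f.continuous.comp (ξ j).continuous)

open scoped Kronecker

/-- Evaluation at a point, as a star algebra homomorphism `𝔸 n →⋆ₐ[ℂ] Mat n`. -/
def evalHom (n : ℕ) (t : 𝕀) : 𝔸 n →⋆ₐ[ℂ] Mat n :=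
  { toFun := fun f => f t
    map_one' := rfl
    map_mul' := fun _ _ => rfl
    map_zero' := rfl
    map_add' := fun _ _ => rfl
    commutes' := fun _ => rfl
    map_star' := fun _ => rfl }

/-- `a ↦ a ⊗ 1`, with indices identified via `finProdFinEquiv : Fin p × Fin q ≃ Fin (p*q)`. -/
def lKronFun (p q : ℕ) (a : Mat p) : Mat (p * q) :=
  (a ⊗ₖ (1 : Mat q)).submatrix (⇑finProdFinEquiv.symm) (⇑finProdFinEquiv.symm)

/-- `b ↦ 1 ⊗ b`, with indices identified via `finProdFinEquiv : Fin p × Fin q ≃ Fin (p*q)`. -/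
def rKronFun (p q : ℕ) (b : Mat q) : Mat (p * q) :=
  ((1 : Mat p) ⊗ₖ b).submatrix (⇑finProdFinEquiv.symm) (⇑finProdFinEquiv.symm)

lemma lKronFun_one (p q : ℕ) : lKronFun p q 1 = 1 := by
  unfold lKronFun; rw [Matrix.one_kronecker_one, Matrix.submatrix_one_equiv]

lemma rKronFun_one (p q : ℕ) : rKronFun p q 1 = 1 := by
  unfold rKronFun; rw [Matrix.one_kronecker_one, Matrix.submatrix_one_equiv]

lemma lKronFun_mul (p q : ℕ) (a b : Mat p) :
    lKronFun p q (a * b) = lKronFun p q a * lKronFun p q b := by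
  unfold lKronFun
  rw [Matrix.submatrix_mul_equiv _ _ _ finProdFinEquiv.symm _, ← Matrix.mul_kronecker_mul,
    one_mul]

lemma rKronFun_mul (p q : ℕ) (a b : Mat q) :
    rKronFun p q (a * b) = rKronFun p q a * rKronFun p q b := by
  unfold rKronFun
  rw [Matrix.submatrix_mul_equiv _ _ _ finProdFinEquiv.symm _, ← Matrix.mul_kronecker_mul,
    one_mul]

lemma lKronFun_add (p q : ℕ) (a b : Mat p) :
    lKronFun p q (a + b) = lKronFun p q a + lKronFun p q b := by
  unfold lKronFun; rw [Matrix.add_kronecker, Matrix.submatrix_add]; rfl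

lemma rKronFun_add (p q : ℕ) (a b : Mat q) :
    rKronFun p q (a + b) = rKronFun p q a + rKronFun p q b := by
  unfold rKronFun; rw [Matrix.kronecker_add, Matrix.submatrix_add]; rfl

lemma lKronFun_smul (p q : ℕ) (c : ℂ) (a : Mat p) :
    lKronFun p q (c • a) = c • lKronFun p q a := by
  unfold lKronFun; rw [Matrix.smul_kronecker, Matrix.submatrix_smul]; rfl

lemma rKronFun_smul (p q : ℕ) (c : ℂ) (b : Mat q) :
    rKronFun p q (c • b) = c • rKronFun p q b := by
  unfold rKronFun; rw [Matrix.kronecker_smul, Matrix.submatrix_smul]; rfl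

lemma lKronFun_star (p q : ℕ) (a : Mat p) :
    lKronFun p q (star a) = star (lKronFun p q a) := by
  ext x y
  simp [lKronFun, Matrix.submatrix_apply, Matrix.star_apply, Matrix.kroneckerMap_apply,
    Matrix.one_apply, star_mul', apply_ite, eq_comm]
  split_ifs with h <;> tauto

lemma rKronFun_star (p q : ℕ) (b : Mat q) :
    rKronFun p q (star b) = star (rKronFun p q b) := by
  ext x y
  simp [rKronFun, Matrix.submatrix_apply, Matrix.star_apply, Matrix.kroneckerMap_apply,
    Matrix.one_apply, star_mul', apply_ite, eq_comm]
  split_ifs with h <;> tauto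

/-- The unital star-algebra embedding `M_p(ℂ) → M_{pq}(ℂ)`, `a ↦ a ⊗ 1`. -/
def lKron (p q : ℕ) : Mat p →⋆ₐ[ℂ] Mat (p * q) :=
  { toFun := lKronFun p q
    map_one' := lKronFun_one p q
    map_mul' := lKronFun_mul p q
    map_zero' := by
      show lKronFun p q 0 = 0
      have := lKronFun_smul p q 0 1; simpa using this
    map_add' := lKronFun_add p q
    commutes' := fun c => by
      show lKronFun p q (algebraMap ℂ (Mat p) c) = algebraMap ℂ (Mat (p * q)) c
      rw [Algebra.algebraMap_eq_smul_one, Algebra.algebraMap_eq_smul_one,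
        lKronFun_smul, lKronFun_one]
    map_star' := fun a => by
      show lKronFun p q (star a) = star (lKronFun p q a)
      exact lKronFun_star p q a }

/-- The unital star-algebra embedding `M_q(ℂ) → M_{pq}(ℂ)`, `b ↦ 1 ⊗ b`. -/
def rKron (p q : ℕ) : Mat q →⋆ₐ[ℂ] Mat (p * q) :=
  { toFun := rKronFun p q
    map_one' := rKronFun_one p q
    map_mul' := rKronFun_mul p q
    map_zero' := by
      show rKronFun p q 0 = 0
      have := rKronFun_smul p q 0 1; simpa using this
    map_add' := rKronFun_add p q
    commutes' := fun c => by
      show rKronFun p q (algebraMap ℂ (Mat q) c) = algebraMap ℂ (Mat (p * q)) c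
      rw [Algebra.algebraMap_eq_smul_one, Algebra.algebraMap_eq_smul_one,
        rKronFun_smul, rKronFun_one]
    map_star' := fun b => by
      show rKronFun p q (star b) = star (rKronFun p q b)
      exact rKronFun_star p q b }

/-- The dimension drop algebra `Z_{p,q}`: the star subalgebra of `C([0,1], M_{pq}(ℂ))`
consisting of those `f` with `f 0 ∈ M_p(ℂ) ⊗ 1` and `f 1 ∈ 1 ⊗ M_q(ℂ)`. -/
def Zpq (p q : ℕ) : StarSubalgebra ℂ (𝔸 (p * q)) :=
  ((lKron p q).range.comap (evalHom (p * q) 0)) ⊓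
    ((rKron p q).range.comap (evalHom (p * q) 1))

/-- `mult k ξ s t` is the number of indices `i` with `ξ i s = t`. -/
def mult (k : ℕ) (ξ : Fin k → C(𝕀, 𝕀)) (s t : 𝕀) : ℕ :=
  Set.ncard {i : Fin k | ξ i s = t}


namespace S10
open Matrix

lemma trace_idem_nat {n : ℕ} (A : Mat n) (hA : A * A = A) :
    ∃ r : ℕ, A.trace = (r : ℂ) := by
  have h2 : Matrix.toLin' A ∘ₗ Matrix.toLin' A = Matrix.toLin' A := by
    rw [← Matrix.toLin'_mul, hA]
  obtain ⟨p, hp⟩ := (LinearMap.isProj_iff_isIdempotentElem _).mpr h2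
  refine ⟨Module.finrank ℂ p, ?_⟩
  have h3 := hp.trace
  have h4 : LinearMap.trace ℂ (Fin n → ℂ) (Matrix.toLin' A) = A.trace := by
    rw [LinearMap.trace_eq_matrix_trace ℂ (Pi.basisFun ℂ (Fin n)),
      LinearMap.toMatrix_eq_toMatrix', LinearMap.toMatrix'_toLin']
  rw [← h4, h3]

lemma trace_submatrix_equiv {m n : ℕ} (e : Fin m ≃ Fin n) (A : Mat n) :
    (A.submatrix e e).trace = A.trace := by
  rw [Matrix.trace, Matrix.trace]
  exact Fintype.sum_equiv e _ _ (fun i => rfl)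

/-- permutation matrix -/
def permM {n : ℕ} (σ : Equiv.Perm (Fin n)) : Mat n := (1 : Mat n).submatrix σ id

lemma permM_apply {n : ℕ} (σ : Equiv.Perm (Fin n)) (x y : Fin n) :
    permM σ x y = if σ x = y then 1 else 0 := Matrix.one_apply

lemma permM_mul {n : ℕ} (σ τ : Equiv.Perm (Fin n)) :
    permM σ * permM τ = permM (σ.trans τ) := by
  ext x y
  simp only [Matrix.mul_apply, permM_apply, ite_mul, one_mul, zero_mul]
  rw [Finset.sum_ite_eq (Finset.univ) (σ x) (fun z => if τ z = y then (1:ℂ) else 0)]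
  simp [Equiv.trans_apply]
  exact (permM_apply (σ.trans τ) x y).symm

lemma permM_one {n : ℕ} : permM (Equiv.refl (Fin n)) = 1 := by
  simp [permM]

lemma star_permM {n : ℕ} (σ : Equiv.Perm (Fin n)) : star (permM σ) = permM σ.symm := by
  ext x y
  simp only [Matrix.star_apply, permM_apply]
  have hiff : (σ y = x) ↔ (σ.symm x = y) := by rw [Equiv.symm_apply_eq]; exact eq_comm
  by_cases h : σ y = x
  · rw [if_pos h, if_pos (hiff.mp h)]; simp
  · rw [if_neg h, if_neg (fun hh => h (hiff.mpr hh))]; simp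

lemma permM_mem_unitary {n : ℕ} (σ : Equiv.Perm (Fin n)) : permM σ ∈ unitary (Mat n) := by
  constructor
  · rw [star_permM, permM_mul, Equiv.symm_trans_self, permM_one]
  · rw [star_permM, permM_mul, Equiv.self_trans_symm, permM_one]

lemma permM_conj {n : ℕ} (σ : Equiv.Perm (Fin n)) (A : Mat n) :
    permM σ * A * star (permM σ) = A.submatrix σ σ := by
  rw [star_permM]
  ext x y
  rw [Matrix.mul_apply]
  have h1 : ∀ z, (permM σ * A) x z * permM σ.symm z y
      = if z = σ y then (permM σ * A) x z else 0 := by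
    intro z
    rw [permM_apply]
    by_cases h : σ.symm z = y
    · rw [if_pos h, if_pos (by rw [← h, Equiv.apply_symm_apply]), mul_one]
    · rw [if_neg h, if_neg (by intro hz; exact h (by rw [hz, Equiv.symm_apply_apply])), mul_zero]
  rw [Finset.sum_congr rfl (fun z _ => h1 z), Finset.sum_ite_eq' Finset.univ (σ y) _]
  simp only [Finset.mem_univ, if_true]
  rw [Matrix.mul_apply]
  have h2 : ∀ z, permM σ x z * A z (σ y) = if z = σ x then A z (σ y) else 0 := by
    intro z
    rw [permM_apply]
    by_cases h : σ x = z
    · rw [if_pos h, if_pos h.symm, one_mul]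
    · rw [if_neg h, if_neg (fun hz => h hz.symm), zero_mul]
  rw [Finset.sum_congr rfl (fun z _ => h2 z), Finset.sum_ite_eq' Finset.univ (σ x) _]
  simp [Matrix.submatrix_apply]

lemma lKron_apply (P Q : ℕ) (a : Mat P) : lKron P Q a = lKronFun P Q a := rfl
lemma rKron_apply (P Q : ℕ) (b : Mat Q) : rKron P Q b = rKronFun P Q b := rfl

lemma mem_lKron_range_of {P Q : ℕ} (hQ : 0 < Q) (X : Mat (P * Q))
    (h : ∀ (i i' : Fin P) (s s' : Fin Q),
      X (finProdFinEquiv (i, s)) (finProdFinEquiv (i', s')) =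
        if s = s' then X (finProdFinEquiv (i, ⟨0, hQ⟩)) (finProdFinEquiv (i', ⟨0, hQ⟩)) else 0) :
    X ∈ (lKron P Q).range := by
  have key : lKronFun P Q
      (fun i i' => X (finProdFinEquiv (i, ⟨0,hQ⟩)) (finProdFinEquiv (i', ⟨0,hQ⟩)) : Mat P) = X := by
    ext x y
    rw [← finProdFinEquiv.apply_symm_apply x, ← finProdFinEquiv.apply_symm_apply y]
    obtain ⟨i, s⟩ := finProdFinEquiv.symm x
    obtain ⟨i', s'⟩ := finProdFinEquiv.symm y
    unfold lKronFun
    rw [Matrix.submatrix_apply, Equiv.symm_apply_apply, Equiv.symm_apply_apply, h]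
    show (X (finProdFinEquiv (i, ⟨0,hQ⟩)) (finProdFinEquiv (i', ⟨0,hQ⟩))) * (1 : Mat Q) s s' = _
    simp only [Matrix.one_apply, mul_ite, mul_one, mul_zero]
  exact ⟨(fun i i' => X (finProdFinEquiv (i, ⟨0,hQ⟩)) (finProdFinEquiv (i', ⟨0,hQ⟩)) : Mat P), key⟩

lemma mem_rKron_range_of {P Q : ℕ} (hP : 0 < P) (X : Mat (P * Q))
    (h : ∀ (α α' : Fin P) (i i' : Fin Q),
      X (finProdFinEquiv (α, i)) (finProdFinEquiv (α', i')) =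
        if α = α' then X (finProdFinEquiv (⟨0, hP⟩, i)) (finProdFinEquiv (⟨0, hP⟩, i')) else 0) :
    X ∈ (rKron P Q).range := by
  have key : rKronFun P Q
      (fun i i' => X (finProdFinEquiv (⟨0,hP⟩, i)) (finProdFinEquiv (⟨0,hP⟩, i')) : Mat Q) = X := by
    ext x y
    rw [← finProdFinEquiv.apply_symm_apply x, ← finProdFinEquiv.apply_symm_apply y]
    obtain ⟨α, i⟩ := finProdFinEquiv.symm x
    obtain ⟨α', i'⟩ := finProdFinEquiv.symm y
    unfold rKronFun
    rw [Matrix.submatrix_apply, Equiv.symm_apply_apply, Equiv.symm_apply_apply, h]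
    show (1 : Mat P) α α' * X (finProdFinEquiv (⟨0,hP⟩, i)) (finProdFinEquiv (⟨0,hP⟩, i')) = _
    simp only [Matrix.one_apply, ite_mul, one_mul, zero_mul]
  exact ⟨(fun i i' => X (finProdFinEquiv (⟨0,hP⟩, i)) (finProdFinEquiv (⟨0,hP⟩, i')) : Mat Q), key⟩

end S10
namespace S10

lemma unitary_path_to_hermitian {n : ℕ} (H : Mat n) (hH : star H = H) (hU : H * H = 1) :
    ∃ V : C(𝕀, Mat n), (∀ t, V t ∈ unitary (Mat n)) ∧ V 0 = 1 ∧ V 1 = H := by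
  set Q : Mat n := 1 - H with hQdef
  have hQstar : star Q = Q := by rw [hQdef, star_sub, star_one, hH]
  have hQQ : Q * Q = Q + Q := by
    rw [hQdef, sub_mul, mul_sub, mul_sub, one_mul, one_mul, mul_one, hU]
    abel
  have expand : ∀ a b : ℂ, (1 - a•Q) * (1 - b•Q) = 1 - (a + b - 2*a*b)•Q := by
    intro a b
    simp only [sub_mul, mul_sub, one_mul, mul_one, Matrix.smul_mul, Matrix.mul_smul, smul_smul]
    rw [hQQ]
    simp only [smul_add]
    module
  set c : 𝕀 → ℂ := fun t => (1 - Complex.exp (Real.pi * (t:ℝ) * Complex.I)) / 2 with hc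
  have hcont : Continuous fun t : 𝕀 => (1:Mat n) - c t • Q := by
    refine continuous_const.sub (Continuous.smul (f := c) (g := fun _ => Q) ?_ continuous_const)
    refine (continuous_const.sub ?_).div_const 2
    exact Complex.continuous_exp.comp <|
      (continuous_const.mul (Complex.continuous_ofReal.comp continuous_subtype_val)).mul
        continuous_const
  have hkey : ∀ t : 𝕀, (starRingEnd ℂ) (c t) + c t - 2 * ((starRingEnd ℂ) (c t)) * c t = 0 := by
    intro t
    set l := Complex.exp (Real.pi * (t:ℝ) * Complex.I) with hl
    have hconj : (starRingEnd ℂ) l = Complex.exp (-(Real.pi * (t:ℝ) * Complex.I)) := by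
      rw [hl, ← Complex.exp_conj]
      congr 1
      simp [Complex.ext_iff]
    have hml : (starRingEnd ℂ) l * l = 1 := by
      rw [hconj, ← Complex.exp_add, neg_add_cancel, Complex.exp_zero]
    have hcc : (starRingEnd ℂ) (c t) = (1 - (starRingEnd ℂ) l) / 2 := by
      rw [hc]
      simp only [map_div₀, map_sub, map_one, map_ofNat]
      rfl
    rw [hcc, hc]
    have : (1 - (starRingEnd ℂ) l) / 2 + (1 - l) / 2 -
        2 * ((1 - (starRingEnd ℂ) l) / 2) * ((1 - l) / 2) = (1 - (starRingEnd ℂ) l * l)/2 := by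
      ring
    rw [this, hml, sub_self, zero_div]
  refine ⟨⟨fun t => (1:Mat n) - c t • Q, hcont⟩, ?_, ?_, ?_⟩
  · intro t
    have hstar : star ((1:Mat n) - c t • Q) = (1:Mat n) - ((starRingEnd ℂ) (c t)) • Q := by
      rw [star_sub, star_one, star_smul, hQstar]
      rfl
    constructor
    · show star _ * _ = 1
      simp only [ContinuousMap.coe_mk]
      rw [hstar, expand]
      rw [hkey t]
      simp
    · show _ * star _ = 1
      simp only [ContinuousMap.coe_mk]
      rw [hstar, expand]
      have : c t + (starRingEnd ℂ) (c t) - 2 * (c t) * ((starRingEnd ℂ) (c t)) = 0 := by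
        have := hkey t; linear_combination this
      rw [this]
      simp
  · show (1:Mat n) - c 0 • Q = 1
    have : c 0 = 0 := by
      rw [hc]
      simp
    rw [this]; simp
  · show (1:Mat n) - c 1 • Q = H
    have : c 1 = 1 := by
      rw [hc]
      simp [Complex.exp_pi_mul_I]
    rw [this, one_smul, hQdef, sub_sub_cancel]

lemma unitary_path_to_permM {n : ℕ} (σ : Equiv.Perm (Fin n)) :
    ∃ V : C(𝕀, Mat n), (∀ t, V t ∈ unitary (Mat n)) ∧ V 0 = 1 ∧ V 1 = permM σ := by
  refine Equiv.Perm.swap_induction_on σ ⟨ContinuousMap.const _ 1, ?_, rfl, ?_⟩ ?_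
  · intro t; exact (unitary (Mat n)).one_mem
  · show (1 : Mat n) = permM (Equiv.refl (Fin n)); rw [permM_one]
  · rintro f x y hxy ⟨V, hV, hV0, hV1⟩
    have hsymm : (Equiv.swap x y).symm = Equiv.swap x y := Equiv.symm_swap x y
    have hswapstar : star (permM (Equiv.swap x y)) = permM (Equiv.swap x y) := by
      rw [star_permM, hsymm]
    have hswapsq : permM (Equiv.swap x y) * permM (Equiv.swap x y) = 1 := by
      rw [permM_mul]
      have : (Equiv.swap x y).trans (Equiv.swap x y) = Equiv.refl (Fin n) := by
        ext z; simp [Equiv.trans_apply, Equiv.swap_apply_self]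
      rw [this, permM_one]
    obtain ⟨W, hW, hW0, hW1⟩ := unitary_path_to_hermitian _ hswapstar hswapsq
    refine ⟨V * W, ?_, ?_, ?_⟩
    · intro t
      show V t * W t ∈ unitary (Mat n)
      exact (unitary (Mat n)).mul_mem (hV t) (hW t)
    · show V 0 * W 0 = 1
      rw [hV0, hW0]
      exact one_mul 1
    · show V 1 * W 1 = permM (Equiv.swap x y * f)
      rw [hV1, hW1, permM_mul]
      rfl

lemma unitary_path_perm_pair {n : ℕ} (σ₀ σ₁ : Equiv.Perm (Fin n)) :
    ∃ V : C(𝕀, Mat n), (∀ t, V t ∈ unitary (Mat n)) ∧ V 0 = permM σ₀ ∧ V 1 = permM σ₁ := by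
  obtain ⟨W, hW, hW0, hW1⟩ := unitary_path_to_permM (n := n) (σ₀.symm.trans σ₁)
  refine ⟨ContinuousMap.const _ (permM σ₀) * W, ?_, ?_, ?_⟩
  · intro t
    show permM σ₀ * W t ∈ unitary (Mat n)
    exact (unitary (Mat n)).mul_mem (permM_mem_unitary σ₀) (hW t)
  · show permM σ₀ * W 0 = permM σ₀
    rw [hW0, mul_one]
  · show permM σ₀ * W 1 = permM σ₁
    rw [hW1, permM_mul]
    have h : σ₀.trans (σ₀.symm.trans σ₁) = σ₁ := by
      ext z
      simp only [Equiv.trans_apply, Equiv.symm_apply_apply]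
    rw [h]

end S10
namespace S10
open Matrix

lemma trace_submatrix_equiv' {α β : Type*} [Fintype α] [Fintype β] [DecidableEq α]
    [DecidableEq β] (e : α ≃ β) (A : Matrix β β ℂ) :
    (A.submatrix e e).trace = A.trace := by
  rw [Matrix.trace, Matrix.trace]
  exact Fintype.sum_equiv e _ _ (fun i => rfl)

/-- The reindexing equiv used by `diagL`. -/
def dEquiv (n k m : ℕ) (h : n * k = m) : Fin m ≃ Fin n × Fin k :=
  (finCongr h.symm).trans finProdFinEquiv.symm

lemma diagL_eq (n k m : ℕ) (h : n * k = m) (g : Fin k → Mat n) :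
    diagL n k m h g = (Matrix.blockDiagonal g).submatrix (dEquiv n k m h) (dEquiv n k m h) := rfl

lemma diagL_mul (n k m : ℕ) (h : n * k = m) (g₁ g₂ : Fin k → Mat n) :
    diagL n k m h g₁ * diagL n k m h g₂ = diagL n k m h (fun j => g₁ j * g₂ j) := by
  rw [diagL_eq, diagL_eq, diagL_eq, Matrix.submatrix_mul_equiv, Matrix.blockDiagonal_mul]

lemma diagL_trace (n k m : ℕ) (h : n * k = m) (g : Fin k → Mat n) :
    (diagL n k m h g).trace = ∑ j, (g j).trace := by
  rw [diagL_eq, trace_submatrix_equiv', Matrix.trace_blockDiagonal]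

lemma trace_lKronFun (P Q : ℕ) (a : Mat P) : (lKronFun P Q a).trace = a.trace * Q := by
  unfold lKronFun
  rw [trace_submatrix_equiv' finProdFinEquiv.symm, Matrix.trace_kronecker, Matrix.trace_one]
  norm_num

lemma trace_rKronFun (P Q : ℕ) (b : Mat Q) : (rKronFun P Q b).trace = b.trace * P := by
  unfold rKronFun
  rw [trace_submatrix_equiv' finProdFinEquiv.symm, Matrix.trace_kronecker, Matrix.trace_one]
  norm_num
  ring

lemma trace_E00 (n : ℕ) (hn : 0 < n) :
    (Matrix.single (⟨0, hn⟩ : Fin n) ⟨0, hn⟩ (1:ℂ)).trace = 1 := by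
  classical
  rw [Matrix.trace]
  have hdg : ∀ j : Fin n, Matrix.diag (Matrix.single (⟨0, hn⟩ : Fin n) ⟨0, hn⟩ (1:ℂ)) j
      = if (⟨0, hn⟩ : Fin n) = j then (1:ℂ) else 0 := fun j => by
    simp [Matrix.diag, Matrix.single, Matrix.of_apply, and_self]
  rw [Finset.sum_congr rfl fun j _ => hdg j]
  simp

lemma lKronFun_inj (P Q : ℕ) (hQ : 0 < Q) (a a' : Mat P)
    (hc : lKronFun P Q a = lKronFun P Q a') : a = a' := by
  ext i i'
  have h1 := congrFun (congrFun hc (finProdFinEquiv (i, (⟨0,hQ⟩ : Fin Q))))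
    (finProdFinEquiv (i', (⟨0,hQ⟩ : Fin Q)))
  unfold lKronFun at h1
  rw [Matrix.submatrix_apply, Matrix.submatrix_apply, Equiv.symm_apply_apply,
    Equiv.symm_apply_apply] at h1
  simpa [Matrix.kroneckerMap_apply, Matrix.one_apply] using h1

lemma rKronFun_inj (P Q : ℕ) (hP : 0 < P) (b b' : Mat Q)
    (hc : rKronFun P Q b = rKronFun P Q b') : b = b' := by
  ext i i'
  have h1 := congrFun (congrFun hc (finProdFinEquiv ((⟨0,hP⟩ : Fin P), i)))
    (finProdFinEquiv ((⟨0,hP⟩ : Fin P), i'))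
  unfold rKronFun at h1
  rw [Matrix.submatrix_apply, Matrix.submatrix_apply, Equiv.symm_apply_apply,
    Equiv.symm_apply_apply] at h1
  simpa [Matrix.kroneckerMap_apply, Matrix.one_apply] using h1

lemma nat_div_of_lKron (P Q : ℕ) (hQ : 0 < Q) (v X : Mat (P*Q)) (hv : v ∈ unitary (Mat (P*Q)))
    (hX : X * X = X) (hmem : v * X * star v ∈ (lKron P Q).range) (n : ℕ)
    (htr : X.trace = (n : ℂ)) : Q ∣ n := by
  obtain ⟨a, ha⟩ := hmem
  have ha' : lKronFun P Q a = v * X * star v := ha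
  have hconj : (v * X * star v) * (v * X * star v) = v * X * star v := by
    have h1 : star v * v = 1 := hv.1
    calc (v * X * star v) * (v * X * star v) = v * (X * (star v * v) * X) * star v := by
          noncomm_ring
    _ = v * X * star v := by rw [h1, mul_one, hX]
  have haa : a * a = a := by
    apply lKronFun_inj P Q hQ
    rw [lKronFun_mul, ha', hconj]
  obtain ⟨r, hr⟩ := trace_idem_nat a haa
  have htr2 : (v * X * star v).trace = X.trace := by
    rw [Matrix.trace_mul_comm, ← mul_assoc, hv.1, one_mul]
  have : (n : ℂ) = (r * Q : ℕ) := by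
    rw [← htr, ← htr2, ← ha', trace_lKronFun, hr]
    push_cast
    ring
  have hn : n = r * Q := by exact_mod_cast this
  exact ⟨r, by rw [hn, mul_comm]⟩

lemma nat_div_of_rKron (P Q : ℕ) (hP : 0 < P) (v X : Mat (P*Q)) (hv : v ∈ unitary (Mat (P*Q)))
    (hX : X * X = X) (hmem : v * X * star v ∈ (rKron P Q).range) (n : ℕ)
    (htr : X.trace = (n : ℂ)) : P ∣ n := by
  obtain ⟨b, hb⟩ := hmem
  have hb' : rKronFun P Q b = v * X * star v := hb
  have hconj : (v * X * star v) * (v * X * star v) = v * X * star v := by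
    have h1 : star v * v = 1 := hv.1
    calc (v * X * star v) * (v * X * star v) = v * (X * (star v * v) * X) * star v := by
          noncomm_ring
    _ = v * X * star v := by rw [h1, mul_one, hX]
  have haa : b * b = b := by
    apply rKronFun_inj P Q hP
    rw [rKronFun_mul, hb', hconj]
  obtain ⟨r, hr⟩ := trace_idem_nat b haa
  have htr2 : (v * X * star v).trace = X.trace := by
    rw [Matrix.trace_mul_comm, ← mul_assoc, hv.1, one_mul]
  have : (n : ℂ) = (r * P : ℕ) := by
    rw [← htr, ← htr2, ← hb', trace_rKronFun, hr]
    push_cast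
    ring
  have hn : n = r * P := by exact_mod_cast this
  exact ⟨r, by rw [hn, mul_comm]⟩

lemma exists_bump (S : Finset 𝕀) (t : 𝕀) (ht : t ∉ S) :
    ∃ c : C(𝕀, ℂ), c t = 1 ∧ ∀ s ∈ S, c s = 0 := by
  have hcont : Continuous fun s : 𝕀 => ∏ y ∈ S, ((dist s y : ℂ) / (dist t y : ℂ)) := by
    refine continuous_finset_prod _ fun y _ => Continuous.div_const ?_ _
    exact Complex.continuous_ofReal.comp (Continuous.dist continuous_id continuous_const)
  refine ⟨⟨_, hcont⟩, ?_, ?_⟩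
  · show (∏ y ∈ S, ((dist t y : ℂ) / (dist t y : ℂ))) = 1
    refine Finset.prod_eq_one fun y hy => ?_
    have hne : t ≠ y := fun h => ht (h ▸ hy)
    have : dist t y ≠ 0 := dist_ne_zero.mpr hne
    rw [div_self (by exact_mod_cast this)]
  · intro s hs
    show (∏ y ∈ S, ((dist s y : ℂ) / (dist t y : ℂ))) = 0
    refine Finset.prod_eq_zero hs ?_
    rw [dist_self]
    simp

lemma mult_eq_card_filter (k : ℕ) (ξ : Fin k → C(𝕀, 𝕀)) (s t : 𝕀)
    [DecidablePred fun j : Fin k => ξ j s = t] :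
    mult k ξ s t = (Finset.univ.filter (fun j : Fin k => ξ j s = t)).card := by
  classical
  rw [mult, Set.ncard_eq_toFinset_card', Set.toFinset_setOf]

end S10
namespace S10
open Matrix

lemma lKronFun_apply' (P Q : ℕ) (a : Mat P) (α α' : Fin P) (β β' : Fin Q) :
    lKronFun P Q a (finProdFinEquiv (α,β)) (finProdFinEquiv (α',β')) =
      if β = β' then a α α' else 0 := by
  unfold lKronFun
  rw [Matrix.submatrix_apply, Equiv.symm_apply_apply, Equiv.symm_apply_apply]
  simp only [Matrix.kroneckerMap_apply, Matrix.one_apply, mul_ite, mul_one, mul_zero]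

lemma rKronFun_apply' (P Q : ℕ) (b : Mat Q) (α α' : Fin P) (β β' : Fin Q) :
    rKronFun P Q b (finProdFinEquiv (α,β)) (finProdFinEquiv (α',β')) =
      if α = α' then b β β' else 0 := by
  unfold rKronFun
  rw [Matrix.submatrix_apply, Equiv.symm_apply_apply, Equiv.symm_apply_apply]
  simp only [Matrix.kroneckerMap_apply, Matrix.one_apply, ite_mul, one_mul, zero_mul]

lemma ite_split {F G : Type*} [DecidableEq F] [DecidableEq G] (x y : F × G) (A : ℂ) :
    (if x.2 = y.2 then (if x.1 = y.1 then A else 0) else 0) = if x = y then A else 0 := by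
  by_cases h1 : x.1 = y.1 <;> by_cases h2 : x.2 = y.2 <;> simp [Prod.ext_iff, h1, h2]

lemma ite_prod_split {F G : Type*} [DecidableEq F] [DecidableEq G] (a a' : F) (s s' s0 : G)
    (A : ℂ) :
    (if (a,s) = (a',s') then A else 0)
      = if s = s' then (if (a,s0) = (a',s0) then A else 0) else 0 := by
  by_cases h1 : a = a' <;> by_cases h2 : s = s' <;> simp [Prod.ext_iff, h1, h2]

lemma exists_test (p q k : ℕ) (ξ : Fin k → C(𝕀,𝕀)) (b t : 𝕀) (g : Mat (p*q))
    (hg0 : t = 0 → g ∈ (lKron p q).range) (hg1 : t = 1 → g ∈ (rKron p q).range) :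
    ∃ f : 𝔸 (p*q), f ∈ Zpq p q ∧ ∀ j : Fin k, f (ξ j b) = if ξ j b = t then g else 0 := by
  classical
  set S : Finset 𝕀 := (Finset.image (fun j => ξ j b) Finset.univ ∪ {0, 1}).erase t with hS
  obtain ⟨c, hct, hcS⟩ := exists_bump S t (Finset.notMem_erase t _)
  set f : 𝔸 (p*q) := ⟨fun s => c s • g, (map_continuous c).smul continuous_const⟩ with hf
  have hfval : ∀ s : 𝕀, f s = c s • g := fun s => rfl
  have hmem0 : (0:𝕀) ∈ (Finset.image (fun j => ξ j b) Finset.univ ∪ ({0, 1} : Finset 𝕀)) :=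
    Finset.mem_union_right _ (by simp)
  have hmem1 : (1:𝕀) ∈ (Finset.image (fun j => ξ j b) Finset.univ ∪ ({0, 1} : Finset 𝕀)) :=
    Finset.mem_union_right _ (by simp)
  refine ⟨f, ?_, ?_⟩
  · show f ∈ _ ⊓ _
    rw [StarSubalgebra.mem_inf, StarSubalgebra.mem_comap, StarSubalgebra.mem_comap]
    have hev0 : evalHom (p*q) 0 f = f 0 := rfl
    have hev1 : evalHom (p*q) 1 f = f 1 := rfl
    constructor
    · rw [hev0, hfval]
      by_cases h0 : t = 0
      · rw [← h0, hct, one_smul]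
        exact hg0 h0
      · have : (0:𝕀) ∈ S := by
          rw [hS]
          exact Finset.mem_erase.mpr ⟨fun h => h0 h.symm, hmem0⟩
        rw [hcS 0 this, zero_smul]
        exact ⟨0, map_zero _⟩
    · rw [hev1, hfval]
      by_cases h1 : t = 1
      · rw [← h1, hct, one_smul]
        exact hg1 h1
      · have : (1:𝕀) ∈ S := by
          rw [hS]
          exact Finset.mem_erase.mpr ⟨fun h => h1 h.symm, hmem1⟩
        rw [hcS 1 this, zero_smul]
        exact ⟨0, map_zero _⟩
  · intro j
    rw [hfval]
    by_cases hj : ξ j b = t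
    · rw [if_pos hj, hj, hct, one_smul]
    · rw [if_neg hj]
      have : ξ j b ∈ S := by
        rw [hS]
        exact Finset.mem_erase.mpr ⟨hj, Finset.mem_union_left _ (Finset.mem_image_of_mem _
          (Finset.mem_univ j))⟩
      rw [hcS _ this, zero_smul]

lemma class_equiv (p q : ℕ) (d : ℕ) (hd : 0 < d)
    {k : ℕ} (w : Fin k → 𝕀) (t : 𝕀)
    (h0 : t = 0 → d ∣ q * Nat.card {j // w j = t})
    (h1 : t = 1 → d ∣ p * Nat.card {j // w j = t})
    (hi : t ≠ 0 → t ≠ 1 → d ∣ Nat.card {j // w j = t}) :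
    ∃ e : Fin ((p * q * Nat.card {j // w j = t}) / d) × Fin d ≃
        (Fin (p*q) × {j // w j = t}),
      ∀ (c : Mat (p*q)), (t = 0 → c ∈ (lKron p q).range) → (t = 1 → c ∈ (rKron p q).range) →
      ∀ (g g' : Fin ((p * q * Nat.card {j // w j = t}) / d)) (s s' : Fin d),
        (if (e (g,s)).2 = (e (g',s')).2 then c (e (g,s)).1 (e (g',s')).1 else 0)
        = if s = s' then (if (e (g,⟨0,hd⟩)).2 = (e (g',⟨0,hd⟩)).2
            then c (e (g,⟨0,hd⟩)).1 (e (g',⟨0,hd⟩)).1 else 0) else 0 := by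
  classical
  set F := {j // w j = t} with hF
  set n := Nat.card F with hn
  have hcard : Fintype.card F = n := (Nat.card_eq_fintype_card).symm
  by_cases ht0 : t = 0
  · -- value 0 block : c = a ⊗ 1
    obtain ⟨m, hm⟩ := h0 ht0
    have hM : (p * q * n) / d = p * m := by
      have h : p * q * n = d * (p * m) := by rw [mul_assoc, hm]; ring
      rw [h, Nat.mul_div_cancel_left _ hd]
    have hθc : Fintype.card (Fin q × F) = Fintype.card (Fin m × Fin d) := by
      simp [hcard, hm, mul_comm]
    set θ : Fin q × F ≃ Fin m × Fin d := Fintype.equivOfCardEq hθc with hθ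
    have hγc : Fintype.card (Fin p × Fin m) = Fintype.card (Fin ((p * q * n) / d)) := by
      simp [hM]
    set γ : Fin p × Fin m ≃ Fin ((p * q * n) / d) := Fintype.equivOfCardEq hγc with hγ
    set e : Fin ((p * q * n) / d) × Fin d ≃ (Fin (p*q) × F) :=
      ((Equiv.prodCongr γ.symm (Equiv.refl (Fin d))).trans
        ((Equiv.prodAssoc _ _ _).trans
        ((Equiv.prodCongr (Equiv.refl (Fin p)) θ.symm).trans
        ((Equiv.prodAssoc _ _ _).symm.trans
        (Equiv.prodCongr finProdFinEquiv (Equiv.refl F)))))) with he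
    have hE : ∀ (g : Fin ((p * q * n) / d)) (s : Fin d),
        e (g, s) = (finProdFinEquiv ((γ.symm g).1, (θ.symm ((γ.symm g).2, s)).1),
          (θ.symm ((γ.symm g).2, s)).2) := fun g s => rfl
    refine ⟨e, ?_⟩
    intro c hc0 _ g g' s s'
    obtain ⟨a, ha⟩ := hc0 ht0
    have ha' : ∀ x y, c x y = lKronFun p q a x y := by
      intro x y; rw [← ha]; rfl
    rw [hE, hE, hE, hE]
    simp only [ha', lKronFun_apply']
    rw [ite_split (θ.symm ((γ.symm g).2, s)) (θ.symm ((γ.symm g').2, s')),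
      ite_split (θ.symm ((γ.symm g).2, ⟨0,hd⟩)) (θ.symm ((γ.symm g').2, ⟨0,hd⟩))]
    simp only [EmbeddingLike.apply_eq_iff_eq]
    exact ite_prod_split _ _ _ _ _ _
  · by_cases ht1 : t = 1
    · -- value 1 block : c = 1 ⊗ b
      obtain ⟨m, hm⟩ := h1 ht1
      have hM : (p * q * n) / d = q * m := by
        have h : p * q * n = d * (q * m) := by
          rw [show p * q * n = q * (p * n) by ring, hm]; ring
        rw [h, Nat.mul_div_cancel_left _ hd]
      have hθc : Fintype.card (Fin p × F) = Fintype.card (Fin m × Fin d) := by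
        simp [hcard, hm, mul_comm]
      set θ : Fin p × F ≃ Fin m × Fin d := Fintype.equivOfCardEq hθc with hθ
      have hγc : Fintype.card (Fin q × Fin m) = Fintype.card (Fin ((p * q * n) / d)) := by
        simp [hM]
      set γ : Fin q × Fin m ≃ Fin ((p * q * n) / d) := Fintype.equivOfCardEq hγc with hγ
      set e : Fin ((p * q * n) / d) × Fin d ≃ (Fin (p*q) × F) :=
        ((Equiv.prodCongr γ.symm (Equiv.refl (Fin d))).trans
          ((Equiv.prodAssoc _ _ _).trans
          ((Equiv.prodCongr (Equiv.refl (Fin q)) θ.symm).trans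
          ((Equiv.prodAssoc _ _ _).symm.trans
          (Equiv.prodCongr ((Equiv.prodComm _ _).trans finProdFinEquiv) (Equiv.refl F)))))) with he
      have hE : ∀ (g : Fin ((p * q * n) / d)) (s : Fin d),
          e (g, s) = (finProdFinEquiv ((θ.symm ((γ.symm g).2, s)).1, (γ.symm g).1),
            (θ.symm ((γ.symm g).2, s)).2) := fun g s => rfl
      refine ⟨e, ?_⟩
      intro c _ hc1 g g' s s'
      obtain ⟨b, hb⟩ := hc1 ht1
      have hb' : ∀ x y, c x y = rKronFun p q b x y := by
        intro x y; rw [← hb]; rfl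
      rw [hE, hE, hE, hE]
      simp only [hb', rKronFun_apply']
      rw [ite_split (θ.symm ((γ.symm g).2, s)) (θ.symm ((γ.symm g').2, s')),
        ite_split (θ.symm ((γ.symm g).2, ⟨0,hd⟩)) (θ.symm ((γ.symm g').2, ⟨0,hd⟩))]
      simp only [EmbeddingLike.apply_eq_iff_eq]
      exact ite_prod_split _ _ _ _ _ _
    · -- interior
      obtain ⟨m, hm⟩ := hi ht0 ht1
      have hM : (p * q * n) / d = p * q * m := by
        have h : p * q * n = d * (p * q * m) := by rw [hm]; ring
        rw [h, Nat.mul_div_cancel_left _ hd]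
      have hθc : Fintype.card F = Fintype.card (Fin m × Fin d) := by
        simp [hcard, hm, mul_comm]
      set θ : F ≃ Fin m × Fin d := Fintype.equivOfCardEq hθc with hθ
      have hγc : Fintype.card (Fin (p*q) × Fin m) = Fintype.card (Fin ((p * q * n) / d)) := by
        simp [hM]
      set γ : Fin (p*q) × Fin m ≃ Fin ((p * q * n) / d) := Fintype.equivOfCardEq hγc with hγ
      set e : Fin ((p * q * n) / d) × Fin d ≃ (Fin (p*q) × F) :=
        ((Equiv.prodCongr γ.symm (Equiv.refl (Fin d))).trans
          ((Equiv.prodAssoc _ _ _).trans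
          (Equiv.prodCongr (Equiv.refl (Fin (p*q))) θ.symm))) with he
      have hE : ∀ (g : Fin ((p * q * n) / d)) (s : Fin d),
          e (g, s) = ((γ.symm g).1, θ.symm ((γ.symm g).2, s)) := fun g s => rfl
      refine ⟨e, ?_⟩
      intro c _ _ g g' s s'
      rw [hE, hE, hE, hE]
      simp only [EmbeddingLike.apply_eq_iff_eq]
      exact ite_prod_split _ _ _ _ _ _

end S10
namespace S10
open Matrix

lemma master (p q k d D : ℕ) (hd : 0 < d) (hD : p * q * k = D * d)
    (w : Fin k → 𝕀)
    (h0 : d ∣ q * Nat.card {j // w j = (0:𝕀)})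
    (h1 : d ∣ p * Nat.card {j // w j = (1:𝕀)})
    (hi : ∀ t : 𝕀, t ≠ 0 → t ≠ 1 → d ∣ Nat.card {j // w j = t}) :
    ∃ τ : Fin D × Fin d ≃ Fin (p*q) × Fin k,
      ∀ (c : 𝕀 → Mat (p*q)), c 0 ∈ (lKron p q).range → c 1 ∈ (rKron p q).range →
      ∀ (i i' : Fin D) (s s' : Fin d),
        (if (τ (i,s)).2 = (τ (i',s')).2
          then c (w (τ (i,s)).2) (τ (i,s)).1 (τ (i',s')).1 else 0)
        = if s = s' then (if (τ (i,⟨0,hd⟩)).2 = (τ (i',⟨0,hd⟩)).2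
            then c (w (τ (i,⟨0,hd⟩)).2) (τ (i,⟨0,hd⟩)).1 (τ (i',⟨0,hd⟩)).1 else 0) else 0 := by
  classical
  have hcls : ∀ t : 𝕀, ∃ e : Fin ((p * q * Nat.card {j // w j = t}) / d) × Fin d ≃
      (Fin (p*q) × {j // w j = t}),
      ∀ (c : Mat (p*q)), (t = 0 → c ∈ (lKron p q).range) → (t = 1 → c ∈ (rKron p q).range) →
      ∀ (g g' : Fin ((p * q * Nat.card {j // w j = t}) / d)) (s s' : Fin d),
        (if (e (g,s)).2 = (e (g',s')).2 then c (e (g,s)).1 (e (g',s')).1 else 0)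
        = if s = s' then (if (e (g,⟨0,hd⟩)).2 = (e (g',⟨0,hd⟩)).2
            then c (e (g,⟨0,hd⟩)).1 (e (g',⟨0,hd⟩)).1 else 0) else 0 := by
    intro t
    refine class_equiv p q d hd w t ?_ ?_ (fun h1 h2 => hi t h1 h2)
    · intro h; subst h; exact h0
    · intro h; subst h; exact h1
  choose E hE using hcls
  set V := (Finset.image w Finset.univ) with hV
  set e₀ : Fin (p*q) × Fin k ≃ Σ t : ↥V, (Fin (p*q) × {j // w j = ↑t}) :=
    { toFun := fun x => ⟨⟨w x.2, Finset.mem_image_of_mem w (Finset.mem_univ x.2)⟩,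
        (x.1, ⟨x.2, rfl⟩)⟩
      invFun := fun y => (y.2.1, y.2.2.1)
      left_inv := fun x => rfl
      right_inv := by
        rintro ⟨⟨tv, htv⟩, r, j, hj⟩
        have hj' : w j = tv := hj
        subst hj'
        rfl } with he₀
  set Ψ : Fin (p*q) × Fin k ≃ (Σ t : ↥V, Fin ((p * q * Nat.card {j // w j = ↑t}) / d)) × Fin d :=
    e₀.trans ((Equiv.sigmaCongrRight (fun t : ↥V => (E (↑t : 𝕀)).symm)).trans
      (Equiv.sigmaProdDistrib
        (fun t : ↥V => Fin ((p * q * Nat.card {j // w j = (↑t : 𝕀)}) / d)) (Fin d)).symm) with hΨ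
  have hcardS : Fintype.card (Σ t : ↥V, Fin ((p * q * Nat.card {j // w j = ↑t}) / d)) * d
      = D * d := by
    calc Fintype.card (Σ t : ↥V, Fin ((p * q * Nat.card {j // w j = ↑t}) / d)) * d
        = Fintype.card ((Σ t : ↥V, Fin ((p * q * Nat.card {j // w j = ↑t}) / d)) × Fin d) := by
          rw [Fintype.card_prod, Fintype.card_fin]
      _ = Fintype.card (Fin (p*q) × Fin k) := (Fintype.card_congr Ψ).symm
      _ = p * q * k := by rw [Fintype.card_prod, Fintype.card_fin, Fintype.card_fin]
      _ = D * d := hD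
  have hSD : Fintype.card (Σ t : ↥V, Fin ((p * q * Nat.card {j // w j = ↑t}) / d)) = D :=
    Nat.eq_of_mul_eq_mul_right hd hcardS
  set ζ : (Σ t : ↥V, Fin ((p * q * Nat.card {j // w j = ↑t}) / d)) ≃ Fin D :=
    Fintype.equivOfCardEq (by rw [hSD, Fintype.card_fin]) with hζ
  set τ : Fin D × Fin d ≃ Fin (p*q) × Fin k :=
    (Equiv.prodCongr ζ.symm (Equiv.refl (Fin d))).trans ((Equiv.sigmaProdDistrib
        (fun t : ↥V => Fin ((p * q * Nat.card {j // w j = (↑t : 𝕀)}) / d)) (Fin d)).trans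
      ((Equiv.sigmaCongrRight (fun t : ↥V => E (↑t : 𝕀))).trans e₀.symm)) with hτdef
  have hτ : ∀ (i : Fin D) (s : Fin d),
      τ (i,s) = (((E ↑(ζ.symm i).1) ((ζ.symm i).2, s)).1,
        (((E ↑(ζ.symm i).1) ((ζ.symm i).2, s)).2).1) := fun i s => rfl
  refine ⟨τ, ?_⟩
  intro c hc0 hc1 i i' s s'
  have hwval : ∀ (i : Fin D) (s : Fin d),
      w ((((E ↑(ζ.symm i).1) ((ζ.symm i).2, s)).2).1) = ↑(ζ.symm i).1 :=
    fun i s => (((E ↑(ζ.symm i).1) ((ζ.symm i).2, s)).2).2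
  by_cases htt : (ζ.symm i).1 = (ζ.symm i').1
  · -- same class
    rw [hτ i s, hτ i' s', hτ i ⟨0,hd⟩, hτ i' ⟨0,hd⟩]
    rw [hwval i s, hwval i ⟨0,hd⟩]
    revert htt
    obtain ⟨t1, g1⟩ := ζ.symm i
    obtain ⟨t2, g2⟩ := ζ.symm i'
    dsimp only
    intro htt
    subst htt
    have key := hE ↑t1 (c ↑t1)
      (fun h => by rw [h]; exact hc0) (fun h => by rw [h]; exact hc1)
      g1 g2 s s'
    simpa only [Subtype.val_inj] using key
  · -- different classes
    have hne : ∀ (s s' : Fin d),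
        ¬((((E ↑(ζ.symm i).1) ((ζ.symm i).2, s)).2).1
          = (((E ↑(ζ.symm i').1) ((ζ.symm i').2, s')).2).1) := by
      intro s s' h
      apply htt
      apply Subtype.ext
      rw [← hwval i s, ← hwval i' s', h]
    rw [hτ i s, hτ i' s', hτ i ⟨0,hd⟩, hτ i' ⟨0,hd⟩]
    rw [if_neg (hne s s'), if_neg (hne ⟨0,hd⟩ ⟨0,hd⟩)]
    simp
end S10

open S10

/-- For a diagonal *-homomorphism `φ(f) = diag(f∘ξ₁, …, f∘ξ_k)` from the
dimension drop algebra `Z_{p,q}` into `𝔸 (p'q')` (with `kpq = p'q'`), the existence of a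
unitary `u` with `u φ(·) u* ⊆ Z_{p',q'}` is equivalent to the arithmetic congruences on the
multiplicities `n_sᵗ = mult k ξ s t`. -/
theorem statement10 (p q p' q' k : ℕ) (hp : 1 ≤ p) (hq : 1 ≤ q) (hp' : 1 ≤ p')
    (hq' : 1 ≤ q') (hk : 1 ≤ k) (hdim : p * q * k = p' * q') (ξ : Fin k → C(𝕀, 𝕀)) :
    (∃ u ∈ unitary (𝔸 (p' * q')), ∀ f : ↥(Zpq p q),
        u * diag (p * q) k (p' * q') hdim ξ ↑f * star u ∈ Zpq p' q') ↔
    ((q' ∣ q * mult k ξ 0 0) ∧ (q' ∣ p * mult k ξ 0 1) ∧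
      (p' ∣ q * mult k ξ 1 0) ∧ (p' ∣ p * mult k ξ 1 1) ∧
      ∀ t : 𝕀, t ≠ 0 → t ≠ 1 → q' ∣ mult k ξ 0 t ∧ p' ∣ mult k ξ 1 t) := by
  classical
  have hpq : 0 < p * q := Nat.mul_pos hp hq
  have hI01 : (0:𝕀) ≠ (1:𝕀) := by
    intro h
    have h2 := congrArg Subtype.val h
    norm_num at h2
  constructor
  · rintro ⟨u, hu, hmem⟩
    have huv : ∀ t : 𝕀, u t ∈ unitary (Mat (p'*q')) := by
      intro t
      constructor
      · exact congrFun (congrArg DFunLike.coe hu.1) t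
      · exact congrFun (congrArg DFunLike.coe hu.2) t
    have main0 : ∀ (t : 𝕀) (g : Mat (p*q)) (m : ℕ), g * g = g →
        (t = 0 → g ∈ (lKron p q).range) → (t = 1 → g ∈ (rKron p q).range) →
        g.trace = (m:ℂ) → q' ∣ mult k ξ 0 t * m := by
      intro t g m hgg hg0 hg1 htrg
      obtain ⟨f, hfZ, hfval⟩ := exists_test p q k ξ 0 t g hg0 hg1
      set P : Mat (p'*q') := diagL (p*q) k (p'*q') hdim (fun j => f (ξ j 0)) with hPdef
      have hPP : P * P = P := by
        rw [hPdef, diagL_mul]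
        congr 1
        funext j
        rw [hfval j]
        by_cases h : ξ j 0 = t
        · rw [if_pos h, hgg]
        · rw [if_neg h, mul_zero]
      have htrP : P.trace = ((mult k ξ 0 t * m : ℕ) : ℂ) := by
        rw [hPdef, diagL_trace]
        have h1 : ∀ j : Fin k, (f (ξ j 0)).trace = if ξ j 0 = t then (m:ℂ) else 0 := by
          intro j
          rw [hfval j]
          by_cases h : ξ j 0 = t
          · rw [if_pos h, if_pos h, htrg]
          · rw [if_neg h, if_neg h, Matrix.trace_zero]
        rw [Finset.sum_congr rfl (fun j _ => h1 j), ← Finset.sum_filter, Finset.sum_const,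
          mult_eq_card_filter k ξ 0 t, nsmul_eq_mul]
        push_cast
        ring
      have hP01 := StarSubalgebra.mem_inf.mp (hmem ⟨f, hfZ⟩)
      have hP0 : u 0 * P * star (u 0) ∈ (lKron p' q').range :=
        (StarSubalgebra.mem_comap _ _ _).mp hP01.1
      exact nat_div_of_lKron p' q' hq' (u 0) P (huv 0) hPP hP0 (mult k ξ 0 t * m) htrP
    have main1 : ∀ (t : 𝕀) (g : Mat (p*q)) (m : ℕ), g * g = g →
        (t = 0 → g ∈ (lKron p q).range) → (t = 1 → g ∈ (rKron p q).range) →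
        g.trace = (m:ℂ) → p' ∣ mult k ξ 1 t * m := by
      intro t g m hgg hg0 hg1 htrg
      obtain ⟨f, hfZ, hfval⟩ := exists_test p q k ξ 1 t g hg0 hg1
      set P : Mat (p'*q') := diagL (p*q) k (p'*q') hdim (fun j => f (ξ j 1)) with hPdef
      have hPP : P * P = P := by
        rw [hPdef, diagL_mul]
        congr 1
        funext j
        rw [hfval j]
        by_cases h : ξ j 1 = t
        · rw [if_pos h, hgg]
        · rw [if_neg h, mul_zero]
      have htrP : P.trace = ((mult k ξ 1 t * m : ℕ) : ℂ) := by
        rw [hPdef, diagL_trace]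
        have h1 : ∀ j : Fin k, (f (ξ j 1)).trace = if ξ j 1 = t then (m:ℂ) else 0 := by
          intro j
          rw [hfval j]
          by_cases h : ξ j 1 = t
          · rw [if_pos h, if_pos h, htrg]
          · rw [if_neg h, if_neg h, Matrix.trace_zero]
        rw [Finset.sum_congr rfl (fun j _ => h1 j), ← Finset.sum_filter, Finset.sum_const,
          mult_eq_card_filter k ξ 1 t, nsmul_eq_mul]
        push_cast
        ring
      have hP01 := StarSubalgebra.mem_inf.mp (hmem ⟨f, hfZ⟩)
      have hP1 : u 1 * P * star (u 1) ∈ (rKron p' q').range :=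
        (StarSubalgebra.mem_comap _ _ _).mp hP01.2
      exact nat_div_of_rKron p' q' hp' (u 1) P (huv 1) hPP hP1 (mult k ξ 1 t * m) htrP
    have hEp : (Matrix.single (⟨0,hp⟩ : Fin p) (⟨0,hp⟩ : Fin p) (1:ℂ)) *
        (Matrix.single (⟨0,hp⟩ : Fin p) (⟨0,hp⟩ : Fin p) (1:ℂ))
        = Matrix.single (⟨0,hp⟩ : Fin p) (⟨0,hp⟩ : Fin p) (1:ℂ) := by
      rw [Matrix.single_mul_single_same, one_mul]
    have hEq : (Matrix.single (⟨0,hq⟩ : Fin q) (⟨0,hq⟩ : Fin q) (1:ℂ)) *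
        (Matrix.single (⟨0,hq⟩ : Fin q) (⟨0,hq⟩ : Fin q) (1:ℂ))
        = Matrix.single (⟨0,hq⟩ : Fin q) (⟨0,hq⟩ : Fin q) (1:ℂ) := by
      rw [Matrix.single_mul_single_same, one_mul]
    have hEpq : (Matrix.single (⟨0,hpq⟩ : Fin (p*q)) (⟨0,hpq⟩ : Fin (p*q)) (1:ℂ)) *
        (Matrix.single (⟨0,hpq⟩ : Fin (p*q)) (⟨0,hpq⟩ : Fin (p*q)) (1:ℂ))
        = Matrix.single (⟨0,hpq⟩ : Fin (p*q)) (⟨0,hpq⟩ : Fin (p*q)) (1:ℂ) := by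
      rw [Matrix.single_mul_single_same, one_mul]
    refine ⟨?_, ?_, ?_, ?_, ?_⟩
    · have h := main0 0 (lKronFun p q (Matrix.single (⟨0,hp⟩ : Fin p) (⟨0,hp⟩ : Fin p) (1:ℂ))) q
        (by rw [← lKronFun_mul, hEp]) (fun _ => ⟨Matrix.single (⟨0,hp⟩ : Fin p) (⟨0,hp⟩ : Fin p) (1:ℂ), rfl⟩) (fun h => absurd h hI01)
        (by rw [trace_lKronFun, trace_E00 p hp, one_mul])
      rwa [mul_comm] at h
    · have h := main0 1 (rKronFun p q (Matrix.single (⟨0,hq⟩ : Fin q) (⟨0,hq⟩ : Fin q) (1:ℂ))) p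
        (by rw [← rKronFun_mul, hEq]) (fun h => absurd h.symm hI01) (fun _ => ⟨Matrix.single (⟨0,hq⟩ : Fin q) (⟨0,hq⟩ : Fin q) (1:ℂ), rfl⟩)
        (by rw [trace_rKronFun, trace_E00 q hq, one_mul])
      rwa [mul_comm] at h
    · have h := main1 0 (lKronFun p q (Matrix.single (⟨0,hp⟩ : Fin p) (⟨0,hp⟩ : Fin p) (1:ℂ))) q
        (by rw [← lKronFun_mul, hEp]) (fun _ => ⟨Matrix.single (⟨0,hp⟩ : Fin p) (⟨0,hp⟩ : Fin p) (1:ℂ), rfl⟩) (fun h => absurd h hI01)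
        (by rw [trace_lKronFun, trace_E00 p hp, one_mul])
      rwa [mul_comm] at h
    · have h := main1 1 (rKronFun p q (Matrix.single (⟨0,hq⟩ : Fin q) (⟨0,hq⟩ : Fin q) (1:ℂ))) p
        (by rw [← rKronFun_mul, hEq]) (fun h => absurd h.symm hI01) (fun _ => ⟨Matrix.single (⟨0,hq⟩ : Fin q) (⟨0,hq⟩ : Fin q) (1:ℂ), rfl⟩)
        (by rw [trace_rKronFun, trace_E00 q hq, one_mul])
      rwa [mul_comm] at h
    · intro t ht0 ht1
      constructor
      · have h := main0 t (Matrix.single (⟨0,hpq⟩ : Fin (p*q)) (⟨0,hpq⟩ : Fin (p*q)) (1:ℂ)) 1 hEpq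
          (fun h => absurd h ht0) (fun h => absurd h ht1)
          (by rw [trace_E00 (p*q) hpq]; norm_num)
        rwa [Nat.mul_one] at h
      · have h := main1 t (Matrix.single (⟨0,hpq⟩ : Fin (p*q)) (⟨0,hpq⟩ : Fin (p*q)) (1:ℂ)) 1 hEpq
          (fun h => absurd h ht0) (fun h => absurd h ht1)
          (by rw [trace_E00 (p*q) hpq]; norm_num)
        rwa [Nat.mul_one] at h
  · rintro ⟨hd1, hd2, hd3, hd4, hd5⟩
    have hmc : ∀ (s t : 𝕀), mult k ξ s t = Nat.card {j : Fin k // ξ j s = t} :=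
      fun s t => (Nat.card_coe_set_eq _).symm
    obtain ⟨τ₀, hprop₀⟩ := master p q k q' p' hq' hdim (fun j => ξ j 0)
      (by show q' ∣ q * Nat.card {j : Fin k // ξ j 0 = 0}; rw [← hmc]; exact hd1)
      (by show q' ∣ p * Nat.card {j : Fin k // ξ j 0 = 1}; rw [← hmc]; exact hd2)
      (fun t h1 h2 => by
        show q' ∣ Nat.card {j : Fin k // ξ j 0 = t}; rw [← hmc]; exact (hd5 t h1 h2).1)
    obtain ⟨τ₁, hprop₁⟩ := master p q k p' q' hp' (by rw [hdim]; ring) (fun j => ξ j 1)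
      (by show p' ∣ q * Nat.card {j : Fin k // ξ j 1 = 0}; rw [← hmc]; exact hd3)
      (by show p' ∣ p * Nat.card {j : Fin k // ξ j 1 = 1}; rw [← hmc]; exact hd4)
      (fun t h1 h2 => by
        show p' ∣ Nat.card {j : Fin k // ξ j 1 = t}; rw [← hmc]; exact (hd5 t h1 h2).2)
    set σ₀ : Equiv.Perm (Fin (p'*q')) :=
      (finProdFinEquiv.symm.trans τ₀).trans (dEquiv (p*q) k (p'*q') hdim).symm with hσ₀def
    set σ₁ : Equiv.Perm (Fin (p'*q')) :=
      ((finProdFinEquiv.symm.trans (Equiv.prodComm (Fin p') (Fin q'))).trans τ₁).trans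
        (dEquiv (p*q) k (p'*q') hdim).symm with hσ₁def
    obtain ⟨U, hUu, hU0, hU1⟩ := unitary_path_perm_pair σ₀ σ₁
    refine ⟨U, ⟨?_, ?_⟩, ?_⟩
    · exact ContinuousMap.ext fun t => (hUu t).1
    · exact ContinuousMap.ext fun t => (hUu t).2
    · intro f
      have hf2 := StarSubalgebra.mem_inf.mp f.2
      have hc0 : (↑f : 𝔸 (p*q)) 0 ∈ (lKron p q).range := (StarSubalgebra.mem_comap _ _ _).mp hf2.1
      have hc1 : (↑f : 𝔸 (p*q)) 1 ∈ (rKron p q).range := (StarSubalgebra.mem_comap _ _ _).mp hf2.2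
      refine StarSubalgebra.mem_inf.mpr
        ⟨(StarSubalgebra.mem_comap _ _ _).mpr ?_, (StarSubalgebra.mem_comap _ _ _).mpr ?_⟩
      · -- endpoint 0
        set Y : Mat (p'*q') :=
          diagL (p*q) k (p'*q') hdim (fun j => (↑f : 𝔸 (p*q)) (ξ j 0)) with hY
        have hev : evalHom (p'*q') 0 (U * diag (p*q) k (p'*q') hdim ξ ↑f * star U)
            = U 0 * Y * star (U 0) := rfl
        rw [hev, hU0, permM_conj]
        have hσ : ∀ z : Fin p' × Fin q',
            σ₀ (finProdFinEquiv z) = (dEquiv (p*q) k (p'*q') hdim).symm (τ₀ z) := by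
          intro z
          show (dEquiv (p*q) k (p'*q') hdim).symm
            (τ₀ (finProdFinEquiv.symm (finProdFinEquiv z))) = _
          rw [Equiv.symm_apply_apply]
        have hXent : ∀ (i i' : Fin p') (s s' : Fin q'),
            (Y.submatrix ⇑σ₀ ⇑σ₀) (finProdFinEquiv (i,s)) (finProdFinEquiv (i',s')) =
              (if (τ₀ (i,s)).2 = (τ₀ (i',s')).2
                then (↑f : 𝔸 (p*q)) (ξ (τ₀ (i,s)).2 0) (τ₀ (i,s)).1 (τ₀ (i',s')).1 else 0) := by
          intro i i' s s'
          rw [Matrix.submatrix_apply, hσ, hσ, hY, diagL_eq, Matrix.submatrix_apply,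
            Equiv.apply_symm_apply, Equiv.apply_symm_apply, Matrix.blockDiagonal_apply]
        refine mem_lKron_range_of hq' _ ?_
        intro i i' s s'
        rw [hXent i i' s s', hXent i i' ⟨0,hq'⟩ ⟨0,hq'⟩]
        exact hprop₀ (fun x => (↑f : 𝔸 (p*q)) x) hc0 hc1 i i' s s'
      · -- endpoint 1
        set Y : Mat (p'*q') :=
          diagL (p*q) k (p'*q') hdim (fun j => (↑f : 𝔸 (p*q)) (ξ j 1)) with hY
        have hev : evalHom (p'*q') 1 (U * diag (p*q) k (p'*q') hdim ξ ↑f * star U)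
            = U 1 * Y * star (U 1) := rfl
        rw [hev, hU1, permM_conj]
        have hσ : ∀ z : Fin p' × Fin q',
            σ₁ (finProdFinEquiv z) = (dEquiv (p*q) k (p'*q') hdim).symm (τ₁ (z.2, z.1)) := by
          intro z
          show (dEquiv (p*q) k (p'*q') hdim).symm
            (τ₁ ((Equiv.prodComm (Fin p') (Fin q')) (finProdFinEquiv.symm (finProdFinEquiv z))))
            = _
          rw [Equiv.symm_apply_apply]
          rfl
        have hXent : ∀ (α α' : Fin p') (β β' : Fin q'),
            (Y.submatrix ⇑σ₁ ⇑σ₁) (finProdFinEquiv (α,β)) (finProdFinEquiv (α',β')) =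
              (if (τ₁ (β,α)).2 = (τ₁ (β',α')).2
                then (↑f : 𝔸 (p*q)) (ξ (τ₁ (β,α)).2 1) (τ₁ (β,α)).1 (τ₁ (β',α')).1 else 0) := by
          intro α α' β β'
          rw [Matrix.submatrix_apply, hσ, hσ, hY, diagL_eq, Matrix.submatrix_apply,
            Equiv.apply_symm_apply, Equiv.apply_symm_apply, Matrix.blockDiagonal_apply]
        refine mem_rKron_range_of hp' _ ?_
        intro α α' i i'
        rw [hXent α α' i i', hXent ⟨0,hp'⟩ ⟨0,hp'⟩ i i']
        exact hprop₁ (fun x => (↑f : 𝔸 (p*q)) x) hc0 hc1 i i' α α'
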